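/- For every δ > 0 there is a constant D(δ) such that: for every positive integer k and every complex z with 1 − 1/k < |z| < 1 + 1/k and dist(z, Λ_k) > δ/k, where Λ_k = {e^{2πij/k} : 0 ≤ j < k} is the set of k-th roots of unity, one has |log|1 − z^k|| ≤ D(δ). -/

import Mathlib

open Real
set_option maxHeartbeats 1000000

lemma aux_abs_exp_mul_I_sub_one_le (x : ℝ) :
    ‖Complex.exp (x * Complex.I) - 1‖ ≤ |x| := by
  have h2 : ‖Complex.exp (x * Complex.I) - 1‖ ^ 2 = 2 - 2 * Real.cos x := by
    rw [Complex.sq_norm, Complex.normSq_apply]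
    simp [Complex.exp_ofReal_mul_I_re, Complex.exp_ofReal_mul_I_im]
    nlinarith [Real.sin_sq_add_cos_sq x]
  have hcos : 1 - x ^ 2 / 2 ≤ Real.cos x := Real.one_sub_sq_div_two_le_cos
  have : ‖Complex.exp (x * Complex.I) - 1‖ ^ 2 ≤ |x| ^ 2 := by
    rw [h2, sq_abs]; nlinarith
  exact le_of_pow_le_pow_left₀ two_ne_zero (abs_nonneg x) this

lemma aux_quad (δ R c : ℝ) (hR : 1/9 ≤ R)
    (hc : (1/9) * (2*(δ/8)^2) ≤ R * (1 - c)) :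
    (δ/20)^2 ≤ (1 - R*c)^2 + R^2*(1-c^2) := by
  nlinarith [sq_nonneg (1 - R), sq_nonneg δ]

lemma aux_lower (δ : ℝ) (hδ : 0 < δ) (k : ℕ) (hk : 2 ≤ k) (z : ℂ)
    (hz1 : 1 - 1 / k < ‖z‖) (hz2 : ‖z‖ < 1 + 1 / k)
    (hfar : ∀ j < k, δ / k < ‖z - Complex.exp (2 * π * Complex.I * j / k)‖) :
    δ / 20 ≤ ‖1 - z ^ k‖ := by
  have hkR : (2:ℝ) ≤ (k:ℝ) := by exact_mod_cast hk
  have hk0 : (0:ℝ) < k := by linarith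
  have hπ : 0 < π := Real.pi_pos
  set r : ℝ := ‖z‖ with hr
  set α : ℝ := Complex.arg z with hα
  have hk2 : (1:ℝ)/k ≤ 1/2 := by
    rw [div_le_div_iff₀ hk0 (by norm_num)]; linarith
  have hr0 : 0 < r := by linarith
  -- choose nearest root angle
  set n : ℤ := round ((k:ℝ) * α / (2 * π)) with hn
  set θ : ℝ := α - 2 * π * n / k with hθ
  have hround : |(k:ℝ) * α / (2 * π) - n| ≤ 1/2 := abs_sub_round _
  have hθle : |θ| ≤ π / k := by
    have h1 : θ = (2 * π / k) * ((k:ℝ) * α / (2 * π) - n) := by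
      rw [hθ]; field_simp
    rw [h1, abs_mul, abs_of_pos (by positivity : (0:ℝ) < 2 * π / k)]
    calc 2 * π / k * |(k:ℝ) * α / (2 * π) - n| ≤ 2 * π / k * (1/2) := by
          apply mul_le_mul_of_nonneg_left hround (by positivity)
      _ = π / k := by ring
  have hkθ : (k:ℝ) * |θ| ≤ π := by
    rw [← le_div_iff₀' hk0]; exact hθle
  -- the natural index j
  have hkz : (k:ℤ) ≠ 0 := by exact_mod_cast (by omega : k ≠ 0)
  set j : ℕ := (n % k).toNat with hj
  have hjk : j < k := by
    have h1 : n % k < k := Int.emod_lt_of_pos n (by exact_mod_cast (by omega : 0 < k))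
    have h2 : 0 ≤ n % k := Int.emod_nonneg n hkz
    omega
  have hjint : (j:ℤ) = n - k * (n / k) := by
    rw [hj, Int.toNat_of_nonneg (Int.emod_nonneg n hkz), Int.emod_def]
  -- the root of unity
  have hζ : Complex.exp (2 * π * Complex.I * j / k)
      = Complex.exp ((2 * π * n / k : ℝ) * Complex.I) := by
    have hjc : (j:ℂ) = (n:ℂ) - (k:ℂ) * ((n/k : ℤ):ℂ) := by exact_mod_cast hjint
    have hkc : (k:ℂ) ≠ 0 := by exact_mod_cast hk0.ne'
    have heq : 2 * (π:ℂ) * Complex.I * j / k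
        = ((2 * π * n / k : ℝ) : ℂ) * Complex.I + ((-(n/k) : ℤ) : ℂ) * (2 * π * Complex.I) := by
      rw [hjc]; push_cast; field_simp; ring
    rw [heq, Complex.exp_add, Complex.exp_int_mul_two_pi_mul_I, mul_one]
  -- distance bound: δ/k < |r - 1| + |θ|
  have hdist : δ / k < |r - 1| + |θ| := by
    have hz' : z = (r:ℂ) * Complex.exp ((α:ℝ) * Complex.I) := (Complex.norm_mul_exp_arg_mul_I z).symm
    have hsplit : z - Complex.exp ((2 * π * n / k : ℝ) * Complex.I)
        = ((r:ℂ) - 1) * Complex.exp ((α:ℝ) * Complex.I)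
          + Complex.exp ((2 * π * n / k : ℝ) * Complex.I) * (Complex.exp ((θ:ℝ) * Complex.I) - 1) := by
      have hαθ : ((α:ℝ):ℂ) * Complex.I = ((2 * π * n / k : ℝ):ℂ) * Complex.I + ((θ:ℝ):ℂ) * Complex.I := by
        have h5 : α = 2 * π * n / k + θ := by rw [hθ]; ring
        rw [h5]; push_cast; ring
      calc z - Complex.exp ((2 * π * n / k : ℝ) * Complex.I)
          = (r:ℂ) * Complex.exp ((α:ℝ) * Complex.I) - Complex.exp ((2 * π * n / k : ℝ) * Complex.I) := by
            rw [← hz']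
        _ = ((r:ℂ) - 1) * Complex.exp ((α:ℝ) * Complex.I)
          + Complex.exp ((2 * π * n / k : ℝ) * Complex.I) * (Complex.exp ((θ:ℝ) * Complex.I) - 1) := by
            rw [hαθ, Complex.exp_add]; ring
    have hb : ‖z - Complex.exp ((2 * π * n / k : ℝ) * Complex.I)‖ ≤ |r - 1| + |θ| := by
      rw [hsplit]
      refine (norm_add_le _ _).trans ?_
      rw [norm_mul, norm_mul, Complex.norm_exp_ofReal_mul_I, Complex.norm_exp_ofReal_mul_I, mul_one, one_mul]
      have h6 := aux_abs_exp_mul_I_sub_one_le θ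
      have h7 : ‖(r:ℂ) - 1‖ = |r - 1| := by
        rw [← Complex.ofReal_one, ← Complex.ofReal_sub, Complex.norm_real, Real.norm_eq_abs]
      linarith
    have h8 := hfar j hjk
    rw [hζ] at h8
    linarith
  -- bound r^(k-1) and r^k from below by exp(-2) ≥ 1/9
  have hrexp : Real.exp (-(2/k)) ≤ r := by
    have h1 : 2/(k:ℝ) + 1 ≤ Real.exp (2/k) := Real.add_one_le_exp _
    have h3 : (0:ℝ) < Real.exp (2/k) := Real.exp_pos _
    have h4 : 1 / Real.exp (2/k) ≤ 1 / (1 + 2/k) := by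
      apply one_div_le_one_div_of_le (by positivity) (by linarith)
    have h5 : 1 / (1 + 2/(k:ℝ)) ≤ 1 - 1/k := by
      rw [div_le_iff₀ (by positivity)]
      have h6 : (1 - 1/(k:ℝ)) * (1 + 2/k) = 1 + 1/k - 2/k^2 := by field_simp; ring
      rw [h6]
      have h7 : (2:ℝ)/k^2 ≤ 1/k := by
        rw [div_le_div_iff₀ (by positivity) hk0]; nlinarith
      linarith
    have h2 : Real.exp (-(2/k)) = 1 / Real.exp (2/k) := by
      rw [Real.exp_neg, one_div]
    rw [h2]; linarith
  have hkm1 : ((k-1 : ℕ):ℝ) = (k:ℝ) - 1 := by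
    have : 1 ≤ k := by omega
    push_cast [this]; ring
  have hrk1 : Real.exp (-2) ≤ r ^ (k-1) := by
    calc Real.exp (-2) ≤ Real.exp (-(2/k)) ^ (k-1) := by
          rw [← Real.exp_nat_mul, Real.exp_le_exp, mul_neg, neg_le_neg_iff, hkm1,
            mul_div_assoc', div_le_iff₀ hk0]
          nlinarith
      _ ≤ r ^ (k-1) := pow_le_pow_left₀ (Real.exp_pos _).le hrexp _
  have hrklb : Real.exp (-2) ≤ r ^ k := by
    rcases le_or_gt 1 r with h | h
    · calc Real.exp (-2) ≤ 1 := by rw [Real.exp_le_one_iff]; norm_num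
        _ ≤ r ^ k := one_le_pow₀ h
    · calc Real.exp (-2) ≤ Real.exp (-(2/k)) ^ k := by
            rw [← Real.exp_nat_mul, Real.exp_le_exp, mul_neg, neg_le_neg_iff,
              mul_div_assoc', div_le_iff₀ hk0]
            nlinarith
        _ ≤ r ^ k := pow_le_pow_left₀ (Real.exp_pos _).le hrexp _
  have hexp9 : (1:ℝ)/9 ≤ Real.exp (-2) := by
    have h1 := Real.exp_one_lt_d9
    have h2 : Real.exp 2 < 9 := by
      rw [show (2:ℝ) = 1 + 1 by norm_num, Real.exp_add]
      calc Real.exp 1 * Real.exp 1 < 2.7182818286 * 2.7182818286 :=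
            mul_lt_mul'' h1 h1 (Real.exp_pos 1).le (Real.exp_pos 1).le
        _ < 9 := by norm_num
    rw [Real.exp_neg, le_inv_comm₀ (by norm_num) (Real.exp_pos 2)]
    calc Real.exp 2 ≤ 9 := h2.le
      _ ≤ (1/9 : ℝ)⁻¹ := by norm_num
  have hR9 : (1:ℝ)/9 ≤ r ^ k := le_trans hexp9 hrklb
  have hA9 : (1:ℝ)/9 ≤ r ^ (k-1) := le_trans hexp9 hrk1
  have hkhalf : (k:ℝ) * (δ/(2*k)) = δ/2 := by field_simp
  rcases le_or_gt (δ/(2*k)) |r - 1| with hcase | hcase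
  · -- radial case
    have habs : |1 - r^k| ≤ ‖1 - z^k‖ := by
      have h1 := abs_norm_sub_norm_le 1 (z^k)
      rwa [norm_one, norm_pow] at h1
    have hgoal : δ/20 ≤ |1 - r^k| := by
      rcases le_or_gt 1 r with h | h
      · have hbern : 1 + (k:ℝ) * (r - 1) ≤ r ^ k := by
          have := one_add_mul_le_pow (show (-2:ℝ) ≤ r - 1 by linarith) k
          simpa using this
        have h2 : |r - 1| = r - 1 := abs_of_nonneg (by linarith)
        rw [h2] at hcase
        have h3 : δ/2 ≤ (k:ℝ) * (r - 1) := by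
          have := mul_le_mul_of_nonneg_left hcase hk0.le
          linarith [hkhalf ▸ this]
        rw [abs_sub_comm]
        refine le_trans ?_ (le_abs_self _)
        linarith
      · have h2 : |r - 1| = 1 - r := by
          rw [abs_sub_comm]; exact abs_of_nonneg (by linarith)
        rw [h2] at hcase
        have hsum : (k:ℝ) * r^(k-1) ≤ ∑ i ∈ Finset.range k, r^i := by
          have hterm : ∀ i ∈ Finset.range k, r^(k-1) ≤ r^i := by
            intro i hi
            exact pow_le_pow_of_le_one hr0.le h.le (by simp at hi; omega)
          calc (k:ℝ) * r^(k-1) = ∑ _i ∈ Finset.range k, r^(k-1) := by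
                rw [Finset.sum_const, Finset.card_range, nsmul_eq_mul]
            _ ≤ ∑ i ∈ Finset.range k, r^i := Finset.sum_le_sum hterm
        have hgeom : 1 - r^k = (1 - r) * ∑ i ∈ Finset.range k, r^i := by
          linear_combination geom_sum_mul r k
        have h5 : δ/18 ≤ (1 - r) * ((k:ℝ) * r^(k-1)) := by
          have h6 : δ/(2*k) * ((k:ℝ) * (1/9)) ≤ (1-r) * ((k:ℝ) * r^(k-1)) := by
            apply mul_le_mul hcase (mul_le_mul_of_nonneg_left hA9 hk0.le)
              (by positivity) (by linarith)
          have h7 : δ/(2*k) * ((k:ℝ) * (1/9)) = δ/18 := by field_simp; ring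
          linarith
        have h8 : (1 - r) * ((k:ℝ) * r^(k-1)) ≤ 1 - r^k := by
          rw [hgeom]
          exact mul_le_mul_of_nonneg_left hsum (by linarith)
        refine le_trans ?_ (le_abs_self _)
        linarith
    linarith
  · -- angular case
    have hθlb : δ/(2*k) ≤ |θ| := by
      have hdd : δ/(2*(k:ℝ)) + δ/(2*k) = δ/k := by field_simp; ring
      linarith
    have hz' : z = (r:ℂ) * Complex.exp ((α:ℝ) * Complex.I) := (Complex.norm_mul_exp_arg_mul_I z).symm
    have hzk : z ^ k = ((r^k : ℝ):ℂ) * Complex.exp ((((k:ℝ)*α) : ℝ) * Complex.I) := by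
      have harg : ((k:ℕ):ℂ) * ((α:ℝ) * Complex.I) = ((((k:ℝ)*α) : ℝ):ℂ) * Complex.I := by
        push_cast; ring
      rw [hz', mul_pow, ← Complex.exp_nat_mul, harg, ← Complex.ofReal_pow]
    have hre : (z^k).re = r^k * Real.cos ((k:ℝ)*α) := by
      rw [hzk, Complex.mul_re, Complex.exp_ofReal_mul_I_re, Complex.exp_ofReal_mul_I_im,
        Complex.ofReal_re, Complex.ofReal_im]
      ring
    have him : (z^k).im = r^k * Real.sin ((k:ℝ)*α) := by
      rw [hzk, Complex.mul_im, Complex.exp_ofReal_mul_I_re, Complex.exp_ofReal_mul_I_im,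
        Complex.ofReal_re, Complex.ofReal_im]
      ring
    have hsq : ‖1 - z^k‖^2
        = (1 - r^k * Real.cos ((k:ℝ)*α))^2 + (r^k * Real.sin ((k:ℝ)*α))^2 := by
      rw [Complex.sq_norm, Complex.normSq_apply]
      simp [Complex.sub_re, Complex.sub_im, hre, him]
      ring
    have hcc : Real.cos ((k:ℝ)*α) = Real.cos ((k:ℝ)*θ) := by
      have h1 : (k:ℝ)*α = (k:ℝ)*θ + n * (2*π) := by
        rw [hθ]; field_simp; ring
      rw [h1, Real.cos_add_int_mul_two_pi]
    have hhalf : Real.sin ((k:ℝ)*θ/2)^2 = 1/2 - Real.cos ((k:ℝ)*θ)/2 := by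
      have h1 := Real.sin_sq_eq_half_sub ((k:ℝ)*θ/2)
      rwa [show 2*((k:ℝ)*θ/2) = (k:ℝ)*θ by ring] at h1
    have hsinsq : Real.sin ((k:ℝ)*θ/2)^2 = Real.sin ((k:ℝ)*|θ|/2)^2 := by
      rcases abs_cases θ with ⟨h1, _⟩ | ⟨h1, _⟩
      · rw [h1]
      · rw [h1, show (k:ℝ)*(-θ)/2 = -((k:ℝ)*θ/2) by ring, Real.sin_neg]; ring
    have hJ : 2/π * ((k:ℝ)*|θ|/2) ≤ Real.sin ((k:ℝ)*|θ|/2) :=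
      Real.mul_le_sin (by positivity) (by linarith)
    have hπ4 : π ≤ 4 := Real.pi_le_four
    have e2 : δ/2 ≤ (k:ℝ)*|θ| := by
      have := mul_le_mul_of_nonneg_left hθlb hk0.le
      linarith [hkhalf ▸ this]
    have h8 : δ/8 ≤ 2/π * ((k:ℝ)*|θ|/2) := by
      have e1 : 2/π * ((k:ℝ)*|θ|/2) = (k:ℝ)*|θ|/π := by field_simp
      rw [e1, div_le_div_iff₀ (by norm_num) hπ]
      have e3 : δ * π ≤ δ * 4 := mul_le_mul_of_nonneg_left hπ4 hδ.le
      linarith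
    have hsin8 : (δ/8)^2 ≤ Real.sin ((k:ℝ)*θ/2)^2 := by
      rw [hsinsq]
      exact pow_le_pow_left₀ (by positivity) (h8.trans hJ) 2
    have hs : (Real.sin ((k:ℝ)*α))^2 = 1 - (Real.cos ((k:ℝ)*θ))^2 := by
      have h1 := Real.sin_sq_add_cos_sq ((k:ℝ)*α)
      rw [hcc] at h1; linarith
    have hfinal : (δ/20)^2 ≤ ‖1 - z^k‖^2 := by
      rw [hsq, hcc]
      have hsRR : (r^k * Real.sin ((k:ℝ)*α))^2 = (r^k)^2 * (1 - (Real.cos ((k:ℝ)*θ))^2) := by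
        rw [mul_pow, hs]
      rw [hsRR]
      have hc32 : 2 * (δ/8)^2 ≤ 1 - Real.cos ((k:ℝ)*θ) := by
        linarith [hhalf, hsin8]
      have hrk0 : (0:ℝ) ≤ r^k := by positivity
      have h19 : (0:ℝ) ≤ 2*(δ/8)^2 := by positivity
      have hprod : (1/9) * (2*(δ/8)^2) ≤ r^k * (1 - Real.cos ((k:ℝ)*θ)) :=
        mul_le_mul hR9 hc32 h19 hrk0
      exact aux_quad δ (r^k) (Real.cos ((k:ℝ)*θ)) hR9 hprod
    calc δ/20 ≤ ‖1 - z^k‖ :=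
      le_of_pow_le_pow_left₀ two_ne_zero (norm_nonneg _) hfinal

/-- Away from the k-th roots of unity, in the annulus 1 - 1/k < |z| < 1 + 1/k,
|log|1 - z^k|| is bounded by a constant depending only on δ. -/
theorem stmt_3 : ∀ δ > (0:ℝ), ∃ D : ℝ, ∀ (k : ℕ), 0 < k → ∀ z : ℂ,
    1 - 1 / k < ‖z‖ → ‖z‖ < 1 + 1 / k →
    (∀ j < k, δ / k < ‖z - Complex.exp (2 * π * Complex.I * j / k)‖) →
      |Real.log (‖1 - z ^ k‖)| ≤ D := by
  intro δ hδ
  refine ⟨Real.log 4 + |Real.log (δ/20)|, ?_⟩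
  intro k hk z hz1 hz2 hfar
  have hk0 : (0:ℝ) < k := by exact_mod_cast hk
  have hlb : δ/20 ≤ ‖1 - z ^ k‖ := by
    rcases Nat.lt_or_ge k 2 with h2 | h2
    · have hk1 : k = 1 := by omega
      subst hk1
      have h1 := hfar 0 (by norm_num)
      simp only [Nat.cast_zero, Nat.cast_one, mul_zero, zero_div, Complex.exp_zero, div_one] at h1
      rw [pow_one, show (1:ℂ) - z = -(z - 1) by ring, norm_neg]
      linarith
    · exact aux_lower δ hδ k h2 z hz1 hz2 hfar
  have hpos : 0 < ‖1 - z^k‖ := lt_of_lt_of_le (by positivity) hlb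
  have hub : ‖1 - z ^ k‖ ≤ 4 := by
    have h1 : ‖1 - z^k‖ ≤ 1 + ‖z‖ ^ k := by
      calc ‖1 - z^k‖ ≤ ‖(1:ℂ)‖ + ‖-(z^k)‖ := by
            simpa [sub_eq_add_neg] using norm_add_le 1 (-(z^k))
        _ = 1 + ‖z‖ ^ k := by rw [norm_one, norm_neg, norm_pow]
    have h2 : ‖z‖ ^ k ≤ (1 + 1/(k:ℝ))^k :=
      pow_le_pow_left₀ (norm_nonneg z) hz2.le k
    have h3 : (1 + 1/(k:ℝ))^k ≤ Real.exp 1 := by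
      calc (1 + 1/(k:ℝ))^k ≤ Real.exp (1/k) ^ k := by
            apply pow_le_pow_left₀ (by positivity)
            have := Real.add_one_le_exp (1/(k:ℝ)); linarith
        _ = Real.exp ((k:ℕ) * (1/k)) := by rw [← Real.exp_nat_mul]
        _ = Real.exp 1 := by congr 1; field_simp
    have h4 : Real.exp 1 ≤ 3 := Real.exp_one_lt_d9.le.trans (by norm_num)
    linarith
  rw [abs_le]
  constructor
  · have h5 : Real.log (δ/20) ≤ Real.log (‖1 - z^k‖) :=
      Real.log_le_log (by positivity) hlb
    have h6 : -|Real.log (δ/20)| ≤ Real.log (δ/20) := neg_abs_le _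
    have h7 : (0:ℝ) ≤ Real.log 4 := Real.log_nonneg (by norm_num)
    linarith
  · have h5 : Real.log (‖1 - z^k‖) ≤ Real.log 4 := Real.log_le_log hpos hub
    linarith [abs_nonneg (Real.log (δ/20))]
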